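/- Define the linear functional L on polynomials in s by requiring L(F_{2k+1}(s)) = [k = 0] (which determines L since the odd-indexed Fibonacci polynomials F_1, F_3, F_5, ... have degrees 0, 1, 2, ... and form a basis). Then L(F_{2n}(s)) = (-1)^{n-1} G_{2n} for n ≥ 1, where G_{2n} are the Genocchi numbers defined by 2z/(1+e^z) = z + ∑_{n≥1} (-1)^n G_{2n} z^{2n}/(2n)!. -/

import Mathlib

noncomputable def fibPoly : ℕ → Polynomial ℚ
  | 0 => 0
  | 1 => 1
  | n + 2 => fibPoly (n + 1) + Polynomial.X * fibPoly n

/-- EGF of the Genocchi numbers: 2z/(1+e^z). -/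
noncomputable def genocchiSeries : PowerSeries ℚ :=
  2 * PowerSeries.X * (1 + PowerSeries.exp ℚ)⁻¹

/-- The coefficients g_n with 2z/(1+e^z) = ∑ g_n z^n/n!. -/
noncomputable def gcoef (n : ℕ) : ℚ := n.factorial * PowerSeries.coeff n genocchiSeries

/-- The Genocchi number G_{2n}, from 2z/(1+e^z) = z + ∑_{n≥1} (-1)^n G_{2n} z^{2n}/(2n)!. -/
noncomputable def genocchi (n : ℕ) : ℚ := (-1) ^ n * gcoef (2 * n)

section FibIdentity

open Polynomial Finset

lemma fibPoly_add_two (n : ℕ) :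
    fibPoly (n + 2) = fibPoly (n + 1) + Polynomial.X * fibPoly n := rfl





noncomputable def Apoly (n : ℕ) : Polynomial ℚ :=
  ∑ j ∈ Finset.range (n + 1), ((-1 : ℚ) ^ j * (n.choose j : ℚ)) • fibPoly j

noncomputable def Bpoly (n : ℕ) : Polynomial ℚ :=
  ∑ j ∈ Finset.range (n + 1), ((-1 : ℚ) ^ j * (n.choose j : ℚ)) • fibPoly (j + 1)

lemma shift_sum (n : ℕ) (g : ℕ → Polynomial ℚ) :
    ∑ i ∈ Finset.range (n + 1), ((-1 : ℚ) ^ i * (n.choose (i+1) : ℚ)) • g (i+1)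
      = -(∑ j ∈ Finset.range (n + 1), ((-1 : ℚ) ^ j * (n.choose j : ℚ)) • g j)
        + g 0 := by
  rw [Finset.sum_range_succ, Nat.choose_succ_self]
  rw [show ∑ j ∈ Finset.range (n+1), ((-1:ℚ)^j * (n.choose j : ℚ)) • g j
      = ∑ i ∈ Finset.range n, ((-1:ℚ)^(i+1) * (n.choose (i+1) : ℚ)) • g (i+1)
        + ((-1:ℚ)^0 * (n.choose 0 : ℚ)) • g 0 from Finset.sum_range_succ' _ n]
  simp only [Nat.cast_zero, mul_zero, zero_smul, add_zero, pow_zero, Nat.choose_zero_right,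
    Nat.cast_one, mul_one, one_smul, neg_add_rev]
  rw [← Finset.sum_neg_distrib]
  have : ∀ i, -(((-1:ℚ)^(i+1) * (n.choose (i+1) : ℚ)) • g (i+1))
      = ((-1:ℚ)^i * (n.choose (i+1) : ℚ)) • g (i+1) := by
    intro i
    rw [← neg_smul]; congr 1; ring
  simp only [this]
  abel

lemma Apoly_succ (n : ℕ) : Apoly (n + 1) = Apoly n - Bpoly n := by
  have h1 : Apoly (n + 1)
      = ∑ i ∈ Finset.range (n + 1),
          ((-1 : ℚ) ^ (i+1) * ((n+1).choose (i+1) : ℚ)) • fibPoly (i+1)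
        + ((-1 : ℚ) ^ 0 * ((n+1).choose 0 : ℚ)) • fibPoly 0 := by
    rw [Apoly, Finset.sum_range_succ']
  have h2 : ∀ i : ℕ, ((-1 : ℚ) ^ (i+1) * ((n+1).choose (i+1) : ℚ)) • fibPoly (i+1)
      = -(((-1 : ℚ) ^ i * (n.choose i : ℚ)) • fibPoly (i+1))
        + -(((-1 : ℚ) ^ i * (n.choose (i+1) : ℚ)) • fibPoly (i+1)) := by
    intro i
    rw [← neg_smul, ← neg_smul, ← add_smul]
    congr 1
    rw [Nat.choose_succ_succ]
    push_cast
    ring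
  rw [h1]
  simp only [h2, Finset.sum_add_distrib, Finset.sum_neg_distrib]
  rw [shift_sum n fibPoly]
  show _ + _ + _ = _
  rw [show (∑ j ∈ Finset.range (n+1), ((-1:ℚ)^j * (n.choose j : ℚ)) • fibPoly j) = Apoly n from rfl]
  simp [fibPoly, Bpoly]
  abel

lemma Bpoly_succ (n : ℕ) : Bpoly (n + 1) = -(Polynomial.X * Apoly n) := by
  have h1 : Bpoly (n + 1)
      = ∑ i ∈ Finset.range (n + 1),
          ((-1 : ℚ) ^ (i+1) * ((n+1).choose (i+1) : ℚ)) • fibPoly (i+2)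
        + ((-1 : ℚ) ^ 0 * ((n+1).choose 0 : ℚ)) • fibPoly 1 := by
    rw [Bpoly, Finset.sum_range_succ']
  have h2 : ∀ i : ℕ, ((-1 : ℚ) ^ (i+1) * ((n+1).choose (i+1) : ℚ)) • fibPoly (i+2)
      = -(((-1 : ℚ) ^ i * (n.choose i : ℚ)) • fibPoly (i+2))
        + -(((-1 : ℚ) ^ i * (n.choose (i+1) : ℚ)) • fibPoly (i+2)) := by
    intro i
    rw [← neg_smul, ← neg_smul, ← add_smul]
    congr 1
    rw [Nat.choose_succ_succ]
    push_cast
    ring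
  rw [h1]
  simp only [h2, Finset.sum_add_distrib, Finset.sum_neg_distrib]
  rw [shift_sum n (fun j => fibPoly (j+1))]
  have h3 : ∀ i : ℕ, ((-1 : ℚ) ^ i * (n.choose i : ℚ)) • fibPoly (i+2)
      = ((-1 : ℚ) ^ i * (n.choose i : ℚ)) • fibPoly (i+1)
        + Polynomial.X * (((-1 : ℚ) ^ i * (n.choose i : ℚ)) • fibPoly i) := by
    intro i
    rw [fibPoly_add_two, smul_add]
    congr 1
    rw [Polynomial.smul_eq_C_mul, Polynomial.smul_eq_C_mul]
    ring
  simp only [h3, Finset.sum_add_distrib, ← Finset.mul_sum]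
  rw [show (∑ j ∈ Finset.range (n+1), ((-1:ℚ)^j * (n.choose j : ℚ)) • fibPoly j) = Apoly n from rfl,
    show (∑ j ∈ Finset.range (n+1), ((-1:ℚ)^j * (n.choose j : ℚ)) • fibPoly (j+1)) = Bpoly n from rfl]
  simp [fibPoly]
  abel

lemma Apoly_eq (n : ℕ) : Apoly n = -fibPoly n ∧ Bpoly n = fibPoly (n+1) - fibPoly n := by
  induction n with
  | zero => constructor <;> simp [Apoly, Bpoly, fibPoly]
  | succ n ih =>
    obtain ⟨hA, hB⟩ := ih
    constructor
    · rw [Apoly_succ, hA, hB]; abel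
    · rw [Bpoly_succ, hA, fibPoly_add_two]
      ring_nf

/-- The key polynomial identity ∑ (-1)^j C(n,j) F_j = -F_n. -/
lemma binom_fib (n : ℕ) :
    ∑ j ∈ Finset.range (n + 1), ((-1 : ℚ) ^ j * (n.choose j : ℚ)) • fibPoly j
      = -fibPoly n := (Apoly_eq n).1


end FibIdentity

section SeriesLemmas

open PowerSeries Finset





lemma constCoeff_one_add_exp : constantCoeff (1 + exp ℚ) ≠ 0 := by
  simp [constantCoeff_exp]

lemma genocchi_mul : genocchiSeries * (1 + exp ℚ) = 2 * X := by
  rw [genocchiSeries, mul_assoc, PowerSeries.inv_mul_cancel _ constCoeff_one_add_exp, mul_one]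

lemma coeff_two_X (n : ℕ) : coeff n (2 * X : PowerSeries ℚ) = if n = 1 then 2 else 0 := by
  rw [show (2 : PowerSeries ℚ) * X = C 2 * X by simp [map_ofNat], coeff_C_mul, coeff_X]
  split_ifs <;> norm_num

lemma gcoef_rel (n : ℕ) :
    gcoef n + ∑ k ∈ Finset.range (n + 1), (n.choose k : ℚ) * gcoef k
      = if n = 1 then 2 else 0 := by
  have h : coeff n (genocchiSeries * (1 + exp ℚ)) = coeff n (2 * X) := by
    rw [genocchi_mul]
  rw [coeff_two_X, mul_one_add, map_add, coeff_mul,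
      Finset.Nat.sum_antidiagonal_eq_sum_range_succ_mk] at h
  have h2 := congrArg (fun x : ℚ => (n.factorial : ℚ) * x) h
  simp only [mul_add, Finset.mul_sum] at h2
  have hterm : ∀ k ∈ Finset.range (n + 1),
      (n.factorial : ℚ) * (coeff k genocchiSeries * coeff (n - k) (exp ℚ))
        = (n.choose k : ℚ) * gcoef k := by
    intro k hk
    have hkn : k ≤ n := Nat.lt_succ_iff.mp (Finset.mem_range.mp hk)
    have key : ((n.choose k : ℚ)) * (k.factorial : ℚ) * ((n - k).factorial : ℚ)
        = (n.factorial : ℚ) := by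
      exact_mod_cast congrArg (Nat.cast : ℕ → ℚ)
        (Nat.choose_mul_factorial_mul_factorial hkn)
    rw [coeff_exp, gcoef, Algebra.algebraMap_self, RingHom.id_apply]
    have hne : ((n - k).factorial : ℚ) ≠ 0 := Nat.cast_ne_zero.mpr (Nat.factorial_ne_zero _)
    rw [← key]
    field_simp
  rw [Finset.sum_congr rfl hterm] at h2
  have hrhs : (n.factorial : ℚ) * (if n = 1 then 2 else 0) = if n = 1 then 2 else 0 := by
    split_ifs with hn
    · subst hn; norm_num [Nat.factorial]
    · ring
  rw [hrhs] at h2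
  exact h2

lemma genocchi_even : evalNegHom genocchiSeries = genocchiSeries - 2 * X := by
  have h1 : evalNegHom genocchiSeries * (1 + evalNegHom (exp ℚ)) = -(2 * X) := by
    have h := congrArg evalNegHom genocchi_mul
    rw [map_mul, map_add, map_one, map_mul, evalNegHom_X, map_ofNat] at h
    rw [h]; ring
  have h2 : evalNegHom genocchiSeries * (1 + exp ℚ) = -(2 * X) * exp ℚ := by
    have h := congrArg (· * exp ℚ) h1
    simp only [mul_assoc, add_mul, one_mul] at h
    rw [mul_comm (evalNegHom (exp ℚ)) (exp ℚ), exp_mul_exp_neg_eq_one] at h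
    rwa [add_comm 1 (exp ℚ)]
  have h3 : (evalNegHom genocchiSeries - (genocchiSeries - 2 * X)) * (1 + exp ℚ) = 0 := by
    rw [sub_mul, h2, sub_mul, genocchi_mul]
    ring
  rcases mul_eq_zero.mp h3 with h | h
  · exact sub_eq_zero.mp h
  · exact absurd h (fun hh => constCoeff_one_add_exp (by rw [hh]; simp))









lemma sum_range_parity {M : Type*} [AddCommMonoid M] (f : ℕ → M) (N : ℕ) :
    ∑ j ∈ Finset.range (2 * N + 1), f j
      = ∑ m ∈ Finset.range (N + 1), f (2 * m) + ∑ m ∈ Finset.range N, f (2 * m + 1) := by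
  induction N with
  | zero => simp
  | succ N ih =>
    rw [show 2 * (N + 1) + 1 = (2 * N + 1) + 1 + 1 by ring, Finset.sum_range_succ,
      Finset.sum_range_succ, ih, Finset.sum_range_succ (fun m => f (2 * m)) (N + 1),
      Finset.sum_range_succ (fun m => f (2 * m + 1)) N,
      show 2 * (N + 1) = 2 * N + 1 + 1 by ring]
    abel

lemma gcoef_zero : gcoef 0 = 0 := by
  have h := gcoef_rel 0
  simp at h
  linarith

lemma gcoef_odd (n : ℕ) (hodd : n % 2 = 1) : gcoef n = if n = 1 then 1 else 0 := by
  have h := congrArg (coeff n) genocchi_even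
  rw [show evalNegHom genocchiSeries = rescale (-1 : ℚ) genocchiSeries from rfl,
    coeff_rescale, map_sub, coeff_two_X] at h
  have hneg : (-1 : ℚ) ^ n = -1 := Odd.neg_one_pow (Nat.odd_iff.mpr hodd)
  rw [hneg] at h
  have hc : coeff n genocchiSeries = if n = 1 then 1 else 0 := by
    split_ifs at h ⊢ with h1
    · linarith
    · linarith
  rw [gcoef, hc]
  split_ifs with h1
  · subst h1; norm_num
  · ring

lemma gcoef_even_rel (N : ℕ) (hN : 1 ≤ N) :
    gcoef (2 * N) + ∑ m ∈ Finset.range (N + 1), ((2 * N).choose (2 * m) : ℚ) * gcoef (2 * m)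
      = -(2 * N) := by
  have h := gcoef_rel (2 * N)
  rw [if_neg (by omega), sum_range_parity (fun k => ((2 * N).choose k : ℚ) * gcoef k)] at h
  have hodd : ∑ m ∈ Finset.range N, ((2 * N).choose (2 * m + 1) : ℚ) * gcoef (2 * m + 1)
      = 2 * N := by
    have : ∀ m ∈ Finset.range N, ((2 * N).choose (2 * m + 1) : ℚ) * gcoef (2 * m + 1)
        = if m = 0 then (2 * N : ℚ) else 0 := by
      intro m _
      rw [gcoef_odd (2 * m + 1) (by omega)]
      split_ifs with h1 h2 h2
      · subst h2; simp
      · omega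
      · omega
      · ring
    rw [Finset.sum_congr rfl this, Finset.sum_ite_eq' (Finset.range N) 0 (fun _ => (2*N : ℚ))]
    rw [if_pos (Finset.mem_range.mpr hN)]
  rw [hodd] at h
  linarith


end SeriesLemmas

open Finset in
/-- If L is the linear functional with L(F_(2k+1)) = [k = 0], then
L(F_(2n)) = (-1)^(n-1) G_(2n) for n ≥ 1. -/
theorem stmt3 (L : Polynomial ℚ →ₗ[ℚ] ℚ)
    (hL : ∀ k : ℕ, L (fibPoly (2 * k + 1)) = if k = 0 then 1 else 0)
    (n : ℕ) (hn : 1 ≤ n) :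
    L (fibPoly (2 * n)) = (-1) ^ (n - 1) * genocchi n := by
  have Ra : ∀ N : ℕ, 1 ≤ N →
      ∑ m ∈ Finset.range (N + 1), ((2 * N).choose (2 * m) : ℚ) * L (fibPoly (2 * m))
        - 2 * N = -L (fibPoly (2 * N)) := by
    intro N hN
    have h := congrArg L (binom_fib (2 * N))
    rw [map_sum, map_neg] at h
    simp only [map_smul, smul_eq_mul] at h
    rw [sum_range_parity
      (fun j => (-1 : ℚ) ^ j * ((2 * N).choose j : ℚ) * L (fibPoly j))] at h
    have heven : ∀ m ∈ Finset.range (N + 1),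
        (-1 : ℚ) ^ (2 * m) * ((2 * N).choose (2 * m) : ℚ) * L (fibPoly (2 * m))
          = ((2 * N).choose (2 * m) : ℚ) * L (fibPoly (2 * m)) := by
      intro m _
      rw [pow_mul]
      norm_num
    have hodd : ∑ m ∈ Finset.range N,
        (-1 : ℚ) ^ (2 * m + 1) * ((2 * N).choose (2 * m + 1) : ℚ) * L (fibPoly (2 * m + 1))
          = -(2 * N) := by
      have hterm : ∀ m ∈ Finset.range N,
          (-1 : ℚ) ^ (2 * m + 1) * ((2 * N).choose (2 * m + 1) : ℚ) * L (fibPoly (2 * m + 1))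
            = if m = 0 then -(2 * N : ℚ) else 0 := by
        intro m _
        rw [hL m, pow_succ, pow_mul]
        split_ifs with h1
        · subst h1; simp
        · ring
      rw [Finset.sum_congr rfl hterm,
        Finset.sum_ite_eq' (Finset.range N) 0 (fun _ => -(2 * N : ℚ)),
        if_pos (Finset.mem_range.mpr hN)]
    rw [Finset.sum_congr rfl heven, hodd] at h
    linarith
  have key : ∀ N : ℕ, L (fibPoly (2 * N)) = -gcoef (2 * N) := by
    intro N
    induction N using Nat.strong_induction_on with
    | _ N ih =>
      rcases Nat.eq_zero_or_pos N with h0 | h1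
      · subst h0
        simp only [mul_zero, gcoef_zero, neg_zero]
        show L (fibPoly 0) = 0
        rw [show fibPoly 0 = 0 from rfl, map_zero]
      · have ra := Ra N h1
        have rg := gcoef_even_rel N h1
        rw [Finset.sum_range_succ] at ra rg
        have hsum : ∑ m ∈ Finset.range N, ((2 * N).choose (2 * m) : ℚ) * L (fibPoly (2 * m))
            = -∑ m ∈ Finset.range N, ((2 * N).choose (2 * m) : ℚ) * gcoef (2 * m) := by
          rw [← Finset.sum_neg_distrib]
          refine Finset.sum_congr rfl fun m hm => ?_
          rw [ih m (Finset.mem_range.mp hm)]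
          ring
        rw [hsum] at ra
        rw [Nat.choose_self] at ra rg
        push_cast at ra rg
        linarith
  rw [key n, genocchi]
  have hpow : (-1 : ℚ) ^ (n - 1) * (-1) ^ n = -1 := by
    rw [← pow_add, show n - 1 + n = 2 * (n - 1) + 1 by omega, pow_succ, pow_mul]
    norm_num
  calc -gcoef (2 * n) = ((-1 : ℚ) ^ (n - 1) * (-1) ^ n) * gcoef (2 * n) := by
        rw [hpow]; ring
    _ = (-1) ^ (n - 1) * ((-1) ^ n * gcoef (2 * n)) := by ring
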